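/- arXiv:2502.18581 — 2 statements merged into one kernel-verified Lean document; each statement's English description precedes it below -/
import Mathlib

section
/- Let p = softmax(z), fix y*, and define the update direction Δz_k = δ_{k,y*} - p_k. Then the directional derivative of SC(softmax(z + η Δz)) at η = 0 equals p_{y*} - Σ_k p_k², where SC(p) = -(1/V) Σ_j log(V p_j). -/
noncomputable def softmax {V : ℕ} (z : Fin V → ℝ) : Fin V → ℝ :=
  fun j => Real.exp (z j) / ∑ l, Real.exp (z l)

noncomputable def SC {V : ℕ} (p : Fin V → ℝ) : ℝ :=
  -(1 / (V : ℝ)) * ∑ j, Real.log ((V : ℝ) * p j)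

/-- With Δz_k = δ_{k,y*} - p_k, d/dη SC(softmax(z + η Δz)) |_{η=0} = p_{y*} - Σ_k p_k². -/
theorem selfCertainty_directional_deriv {V : ℕ} (hV : 1 ≤ V) (z : Fin V → ℝ) (ystar : Fin V) :
    HasDerivAt
      (fun η : ℝ =>
        SC (softmax (fun k => z k + η * ((if k = ystar then (1 : ℝ) else 0) - softmax z k))))
      (softmax z ystar - ∑ k, (softmax z k) ^ 2) 0 := by
  haveI : Nonempty (Fin V) := Fin.pos_iff_nonempty.mp hV
  have hVpos : (0 : ℝ) < (V : ℝ) := by exact_mod_cast hV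
  set Δ : Fin V → ℝ := fun k => (if k = ystar then (1 : ℝ) else 0) - softmax z k with hΔ
  set S : ℝ := ∑ l, Real.exp (z l) with hSdef
  have hS : 0 < S := Finset.sum_pos (fun i _ => Real.exp_pos _) Finset.univ_nonempty
  have hsum : ∀ η : ℝ, 0 < ∑ l, Real.exp (z l + η * Δ l) := fun η =>
    Finset.sum_pos (fun i _ => Real.exp_pos _) Finset.univ_nonempty
  have hΔsum : ∑ l, Δ l = 0 := by
    have : ∑ l, softmax z l = 1 := by
      simp only [softmax, ← Finset.sum_div]
      exact div_self hS.ne'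
    simp [hΔ, Finset.sum_sub_distrib, this]
  have hderivS : HasDerivAt (fun η : ℝ => ∑ l, Real.exp (z l + η * Δ l))
      (∑ l, Δ l * Real.exp (z l)) 0 := by
    apply HasDerivAt.fun_sum
    intro l _
    have h1 : HasDerivAt (fun η : ℝ => z l + η * Δ l) (Δ l) 0 := by
      simpa using ((hasDerivAt_id (0 : ℝ)).mul_const (Δ l)).const_add (z l)
    simpa [mul_comm] using h1.exp
  have hlog : HasDerivAt (fun η : ℝ => Real.log (∑ l, Real.exp (z l + η * Δ l)))
      ((∑ l, Δ l * Real.exp (z l)) / S) 0 := by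
    have h0 : (∑ l, Real.exp (z l + 0 * Δ l)) = S := by simp [hSdef]
    have := hderivS.log (by rw [h0]; exact hS.ne')
    simpa [h0] using this
  have hfun : (fun η : ℝ =>
        SC (softmax (fun k => z k + η * ((if k = ystar then (1 : ℝ) else 0) - softmax z k)))) =
      fun η : ℝ => (-Real.log V - (1 / (V : ℝ)) * ∑ j, z j)
        + Real.log (∑ l, Real.exp (z l + η * Δ l)) := by
    funext η
    have hT : 0 < ∑ l, Real.exp (z l + η * Δ l) := hsum η
    have hlogterm : ∀ j : Fin V,
        Real.log ((V : ℝ) * (Real.exp (z j + η * Δ j) / (∑ l, Real.exp (z l + η * Δ l))))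
          = Real.log V + (z j + η * Δ j) - Real.log (∑ l, Real.exp (z l + η * Δ l)) := by
      intro j
      rw [Real.log_mul hVpos.ne' (by positivity),
        Real.log_div (Real.exp_pos _).ne' hT.ne', Real.log_exp]
      ring
    show -(1 / (V : ℝ)) * ∑ j, Real.log ((V : ℝ)
        * (Real.exp (z j + η * Δ j) / (∑ l, Real.exp (z l + η * Δ l)))) = _
    rw [Finset.sum_congr rfl (fun j _ => hlogterm j)]
    have hw : ∑ j, (z j + η * Δ j) = ∑ j, z j := by
      rw [Finset.sum_add_distrib, ← Finset.mul_sum, hΔsum, mul_zero, add_zero]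
    rw [Finset.sum_sub_distrib, Finset.sum_add_distrib, hw]
    simp only [Finset.sum_const, Finset.card_univ, Fintype.card_fin, nsmul_eq_mul]
    field_simp
    ring
  rw [hfun]
  have hval : (∑ l, Δ l * Real.exp (z l)) / S = softmax z ystar - ∑ k, (softmax z k) ^ 2 := by
    rw [Finset.sum_div]
    have : ∀ l : Fin V, Δ l * Real.exp (z l) / S
        = (if l = ystar then softmax z l else 0) - (softmax z l) ^ 2 := by
      intro l
      simp only [hΔ, softmax, sub_mul, ite_mul, one_mul, zero_mul]
      rw [sub_div]
      congr 1
      · split <;> simp [softmax, hSdef]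
      · rw [sq, ← hSdef]; ring
    rw [Finset.sum_congr rfl (fun l _ => this l), Finset.sum_sub_distrib,
      Finset.sum_ite_eq' Finset.univ ystar (fun l => softmax z l)]
    simp
  exact hval ▸ (hlog.const_add _)
end

section
/- With notation as above, the directional derivative d/dη SC(softmax(z + η Δz)) at η = 0 is strictly positive if and only if p_{y*} > Σ_k p_k² = ‖p‖₂². -/
/-- The directional derivative of self-certainty along the log-likelihood ascent direction
is strictly positive iff p_{y*} > ‖p‖₂². -/
theorem selfCertainty_deriv_pos_iff {V : ℕ} (hV : 1 ≤ V) (z : Fin V → ℝ) (ystar : Fin V)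
    (d : ℝ)
    (hd : HasDerivAt
      (fun η : ℝ =>
        SC (softmax (fun k => z k + η * ((if k = ystar then (1 : ℝ) else 0) - softmax z k))))
      d 0) :
    0 < d ↔ (∑ k, (softmax z k) ^ 2) < softmax z ystar := by
  have hVpos : (0 : ℝ) < (V : ℝ) := by exact_mod_cast hV
  have hVne : (V : ℝ) ≠ 0 := ne_of_gt hVpos
  haveI : Nonempty (Fin V) := Fin.pos_iff_nonempty.mp hV
  set Δ : Fin V → ℝ := fun k => (if k = ystar then (1 : ℝ) else 0) - softmax z k with hΔ
  -- positivity of exp sums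
  have hSpos : ∀ w : Fin V → ℝ, 0 < ∑ l, Real.exp (w l) := fun w =>
    Finset.sum_pos (fun _ _ => Real.exp_pos _) Finset.univ_nonempty
  -- closed form of the objective
  have hform : ∀ η : ℝ,
      SC (softmax (fun k => z k + η * Δ k)) =
      -Real.log V - (1 / (V : ℝ)) * (∑ j, (z j + η * Δ j)) +
        Real.log (∑ l, Real.exp (z l + η * Δ l)) := by
    intro η
    set w : Fin V → ℝ := fun k => z k + η * Δ k with hw
    have hS := hSpos w
    have hterm : ∀ j, Real.log ((V : ℝ) * softmax w j) =
        Real.log V + w j - Real.log (∑ l, Real.exp (w l)) := by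
      intro j
      have h1 : (0:ℝ) < Real.exp (w j) / ∑ l, Real.exp (w l) :=
        div_pos (Real.exp_pos _) hS
      unfold softmax
      rw [Real.log_mul hVne (ne_of_gt h1), Real.log_div (ne_of_gt (Real.exp_pos _)) (ne_of_gt hS),
        Real.log_exp]
      ring
    unfold SC
    rw [Finset.sum_congr rfl (fun j _ => hterm j)]
    simp only [hw, Finset.sum_sub_distrib, Finset.sum_add_distrib, Finset.sum_const,
      Finset.card_univ, Fintype.card_fin, nsmul_eq_mul]
    field_simp
    ring
  -- derivative of the closed form
  have h1 : ∀ l : Fin V, HasDerivAt (fun η : ℝ => z l + η * Δ l) (Δ l) 0 := by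
    intro l
    simpa using ((hasDerivAt_id (0:ℝ)).mul_const (Δ l)).const_add (z l)
  have h2 : HasDerivAt (fun η : ℝ => ∑ l, Real.exp (z l + η * Δ l))
      (∑ l, Real.exp (z l + 0 * Δ l) * Δ l) 0 :=
    HasDerivAt.fun_sum fun l _ => (h1 l).exp
  have h2' : HasDerivAt (fun η : ℝ => ∑ l, Real.exp (z l + η * Δ l))
      (∑ l, Real.exp (z l) * Δ l) 0 := by simpa using h2
  have hne0 : (∑ l, Real.exp (z l + 0 * Δ l)) ≠ 0 := ne_of_gt (hSpos _)
  have h3 : HasDerivAt (fun η : ℝ => Real.log (∑ l, Real.exp (z l + η * Δ l)))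
      ((∑ l, Real.exp (z l) * Δ l) / (∑ l, Real.exp (z l))) 0 := by
    have := h2'.log hne0
    simpa using this
  have h4 : HasDerivAt (fun η : ℝ => ∑ j, (z j + η * Δ j)) (∑ j, Δ j) 0 :=
    HasDerivAt.fun_sum fun j _ => h1 j
  have hg : HasDerivAt
      (fun η : ℝ => -Real.log V - (1 / (V : ℝ)) * (∑ j, (z j + η * Δ j)) +
        Real.log (∑ l, Real.exp (z l + η * Δ l)))
      (0 - (1 / (V : ℝ)) * (∑ j, Δ j) +
        (∑ l, Real.exp (z l) * Δ l) / (∑ l, Real.exp (z l))) 0 := by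
    exact ((hasDerivAt_const (0:ℝ) (-Real.log V)).sub ((h4).const_mul _)).add h3
  -- value of the derivative
  have hsum1 : (∑ k, softmax z k) = 1 := by
    unfold softmax
    rw [← Finset.sum_div]
    exact div_self (ne_of_gt (hSpos z))
  have hΔsum : (∑ j, Δ j) = 0 := by
    simp only [hΔ, Finset.sum_sub_distrib, hsum1]
    simp
  have hD : (0 - (1 / (V : ℝ)) * (∑ j, Δ j) +
      (∑ l, Real.exp (z l) * Δ l) / (∑ l, Real.exp (z l))) =
      softmax z ystar - ∑ k, (softmax z k) ^ 2 := by
    rw [hΔsum]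
    rw [Finset.sum_div]
    have : ∀ l : Fin V, Real.exp (z l) * Δ l / (∑ m, Real.exp (z m)) =
        softmax z l * Δ l := by
      intro l; unfold softmax; ring
    rw [Finset.sum_congr rfl (fun l _ => this l)]
    simp only [hΔ, mul_sub, Finset.sum_sub_distrib, mul_ite, mul_one, mul_zero,
      Finset.sum_ite_eq', Finset.mem_univ, if_true, sq]
    ring
  have hfun : (fun η : ℝ =>
      SC (softmax (fun k => z k + η * Δ k))) =
      (fun η : ℝ => -Real.log V - (1 / (V : ℝ)) * (∑ j, (z j + η * Δ j)) +
        Real.log (∑ l, Real.exp (z l + η * Δ l))) := funext hform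
  rw [hfun] at hd
  have hdval : d = softmax z ystar - ∑ k, (softmax z k) ^ 2 := by
    rw [hd.unique hg, hD]
  rw [hdval]
  exact sub_pos
end
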